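/- With h_{s,i,j} defined by the recursion h_{s,0,j} = C(s+j-1,j)(s-j)/s, h_{s,i,j} = -((s-j+1)/i) h_{s,i-1,j-1} - ((j-i)/i) h_{s,i-1,j} for i ≥ 1, and h_{s,i,j} = 0 for j ≤ i, the explicit formula h_{s,i,j} = (-1)^{j+1} C(s,j)·[j ≤ i] + (-1)^{i+1} C(2s,i) C(s+j-i-1, s) + (-1)^i (2s-i) C(2s,i) ∑_{t=0}^{i} (-1)^t (2s-t)^{-1} C(i,t) C(s-t-1+j, j) holds for all 0 ≤ i < j ≤ s. -/

import Mathlib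

set_option maxHeartbeats 1000000

open Finset

/-- The two-dimensional coefficient sequence of the paper. -/
def h (s : ℕ) : ℕ → ℕ → ℚ
  | 0, j => if j ≤ 0 then 0 else (Nat.choose (s + j - 1) j : ℚ) * ((s : ℚ) - j) / s
  | i + 1, j =>
      if j ≤ i + 1 then 0
      else -(((s : ℚ) - j + 1) / (i + 1 : ℚ)) * h s i (j - 1)
           - (((j : ℚ) - (i + 1 : ℚ)) / (i + 1 : ℚ)) * h s i j

private lemma aux1 (n k : ℕ) : (n + 1) * Nat.choose n k = Nat.choose (n + 1) k * (n + 1 - k) := by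
  rw [Nat.add_one_mul_choose_eq, Nat.choose_succ_right_eq]

private def Qf (s i j : ℕ) : ℕ → ℚ
  | 0 => 0
  | u + 1 => (-1 : ℚ) ^ (u + 1) / ((2 * s : ℚ) - u) * (Nat.choose i u : ℚ)
      * (Nat.choose (s - (u + 1) - 1 + j) j : ℚ)

private def Gg (s i j : ℕ) : ℕ → ℚ
  | 0 => 0
  | u + 1 => (-1 : ℚ) ^ (u + 1) * (Nat.choose i u : ℚ) * (Nat.choose (s - (u + 1) - 1 + j) j : ℚ)
      * ((s : ℚ) + j - u - 1) / ((2 * s : ℚ) - u)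

private lemma per_t (s i j : ℕ) (hij : i + 1 < j) (hj : j ≤ s) :
    ∀ t ∈ Finset.range (i + 2),
      ((s:ℚ) - j + 1) * (((-1:ℚ)^t / ((2*s:ℚ) - t) * (Nat.choose i t : ℚ)
            * (Nat.choose (s - t - 1 + j) j : ℚ)) + Qf s i j t)
        + ((j:ℚ) - i - 1) * ((-1:ℚ)^t / ((2*s:ℚ) - t) * (Nat.choose i t : ℚ)
            * (Nat.choose (s - t - 1 + j) j : ℚ))
        - ((2*(s:ℚ)) - i - 1) * ((-1:ℚ)^t / ((2*s:ℚ) - t) * (Nat.choose (i+1) t : ℚ)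
            * (Nat.choose (s - t - 1 + j) j : ℚ))
      = Gg s i j (t+1) - Gg s i j t := by
  intro t ht
  rw [Finset.mem_range] at ht
  have hs2 : 2 ≤ s := by omega
  rcases t with _ | u
  · -- t = 0
    simp only [Qf, Gg, pow_zero, pow_one, Nat.cast_zero, sub_zero, Nat.choose_zero_right,
      Nat.cast_one, Nat.sub_zero, add_zero, sub_zero, mul_one, one_mul]
    have hnat : (s - 1 + j) * Nat.choose (s - 1 - 1 + j) j = Nat.choose (s - 1 + j) j * (s - 1) := by
      have h1 := aux1 (s - 1 - 1 + j) j
      rwa [show s - 1 - 1 + j + 1 = s - 1 + j by omega,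
        show s - 1 + j - j = s - 1 by omega] at h1
    have hq : ((s:ℚ) + j - 1) * (Nat.choose (s - 1 - 1 + j) j : ℚ)
        = (Nat.choose (s - 1 + j) j : ℚ) * ((s:ℚ) - 1) := by
      have := congrArg (fun n : ℕ => (n : ℚ)) hnat
      push_cast [Nat.cast_sub (show 1 ≤ s by omega)] at this
      linarith [this]
    have h2s : ((2:ℚ) * s) ≠ 0 := by positivity
    rw [show s - (0+1) - 1 + j = s - 1 - 1 + j from rfl]
    set X0 := (Nat.choose (s - 1 + j) j : ℚ) with hX0
    set X1 := (Nat.choose (s - 1 - 1 + j) j : ℚ) with hX1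
    norm_num
    field_simp
    linear_combination hq
  · -- t = u + 1
    have hu : u ≤ i := by omega
    have hr1 : (Nat.choose (i+1) (u+1) : ℚ) = (Nat.choose i u : ℚ) + (Nat.choose i (u+1) : ℚ) := by
      rw [Nat.choose_succ_succ]; push_cast; ring
    have hr2 : ((u:ℚ)+1) * (Nat.choose i (u+1) : ℚ) = ((i:ℚ) - (u:ℚ)) * (Nat.choose i u : ℚ) := by
      have h1 := Nat.choose_succ_right_eq i u
      have h2 := congrArg (fun n : ℕ => (n:ℚ)) h1
      push_cast at h2
      rw [Nat.cast_sub hu] at h2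
      linarith [h2]
    have hr3 : (Nat.choose i (u+1) : ℚ) * (((s:ℚ)+(j:ℚ)-(u:ℚ)-2) * (Nat.choose (s - (u+1+1) - 1 + j) j : ℚ))
        = (Nat.choose i (u+1) : ℚ) * (((s:ℚ)-(u:ℚ)-2) * (Nat.choose (s - (u+1) - 1 + j) j : ℚ)) := by
      rcases Nat.lt_or_ge u i with hui | hui
      · have hsu : u + 3 ≤ s := by omega
        have h1 := aux1 (s - u - 3 + j) j
        rw [show s - u - 3 + j + 1 = s - u - 2 + j by omega,
            show s - u - 2 + j - j = s - u - 2 by omega] at h1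
        have h2 := congrArg (fun n : ℕ => (n:ℚ)) h1
        have c1 : ((s - u - 2 : ℕ) : ℚ) = (s:ℚ) - (u:ℚ) - 2 := by
          rw [show s - u - 2 = s - (u+2) by omega, Nat.cast_sub (by omega)]; push_cast; ring
        simp only [Nat.cast_mul, Nat.cast_add, c1] at h2
        rw [show s - (u+1+1) - 1 + j = s - u - 3 + j by omega,
            show s - (u+1) - 1 + j = s - u - 2 + j by omega]
        calc (Nat.choose i (u+1) : ℚ) * (((s:ℚ)+(j:ℚ)-(u:ℚ)-2) * (Nat.choose (s - u - 3 + j) j : ℚ))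
            = (Nat.choose i (u+1) : ℚ) * ((((s - u - 2 : ℕ):ℚ) + (j:ℚ)) * (Nat.choose (s - u - 3 + j) j : ℚ)) := by
              rw [c1]; ring
          _ = (Nat.choose i (u+1) : ℚ) * (((s:ℚ)-(u:ℚ)-2) * (Nat.choose (s - u - 2 + j) j : ℚ)) := by
              rw [show (((s - u - 2 : ℕ):ℚ) + (j:ℚ)) * (Nat.choose (s - u - 3 + j) j : ℚ)
                    = ((s:ℚ)-(u:ℚ)-2) * (Nat.choose (s - u - 2 + j) j : ℚ) from by
                rw [c1]
                linarith [h2]]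
      · have : u = i := by omega
        subst this
        simp [Nat.choose_succ_self]
    have d1 : (2*(s:ℚ) - (u:ℚ)) ≠ 0 := by
      have : (u:ℚ) < 2*s := by exact_mod_cast (show u < 2*s by omega)
      intro hcon; linarith
    have d2 : (2*(s:ℚ) - ((u:ℚ)+1)) ≠ 0 := by
      have : (u:ℚ)+1 < 2*s := by exact_mod_cast (show u+1 < 2*s by omega)
      intro hcon; linarith
    have hI1 : (2*(s:ℚ) - (u:ℚ)) * (2*(s:ℚ) - (u:ℚ))⁻¹ = 1 := mul_inv_cancel₀ d1
    have hI2 : (2*(s:ℚ) - ((u:ℚ)+1)) * (2*(s:ℚ) - ((u:ℚ)+1))⁻¹ = 1 := mul_inv_cancel₀ d2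
    simp only [Qf, Gg]
    set a := (Nat.choose i u : ℚ)
    set b := (Nat.choose i (u+1) : ℚ)
    set c := (Nat.choose (i+1) (u+1) : ℚ)
    set X1 := (Nat.choose (s - (u+1) - 1 + j) j : ℚ)
    set X2 := (Nat.choose (s - (u+1+1) - 1 + j) j : ℚ)
    push_cast
    linear_combination ((-1:ℚ)^(u+1)*a*X1) * hI1 - ((-1:ℚ)^(u+1)*a*X1) * hI2
      - ((-1:ℚ)^(u+1)*(2*(s:ℚ) - ((u:ℚ)+1))⁻¹*X1) * hr2
      + ((-1:ℚ)^(u+1)*(2*(s:ℚ) - ((u:ℚ)+1))⁻¹) * hr3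
      - ((2*(s:ℚ)-(i:ℚ)-1)*(-1:ℚ)^(u+1)*(2*(s:ℚ) - ((u:ℚ)+1))⁻¹*X1) * hr1

private def Ss (s i j : ℕ) : ℚ :=
  ∑ t ∈ Finset.range (i + 1),
    (-1 : ℚ) ^ t / ((2 * s : ℚ) - t) * (Nat.choose i t : ℚ) * (Nat.choose (s - t - 1 + j) j : ℚ)

private lemma Bstep (s i j : ℕ) (hij : i + 1 < j) (hj : j ≤ s) :
    (2*(s:ℚ) - i - 1) * Ss s (i+1) j
      = ((s:ℚ) - j + 1) * Ss s i (j-1) + ((j:ℚ) - i - 1) * Ss s i j := by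
  -- decompose Ss s i (j-1)
  have hQ : Ss s i (j-1)
      = (∑ t ∈ Finset.range (i+1+1), ((-1:ℚ)^t / ((2*s:ℚ) - t) * (Nat.choose i t : ℚ)
          * (Nat.choose (s - t - 1 + j) j : ℚ)))
        + ∑ t ∈ Finset.range (i+1+1), Qf s i j t := by
    have step1 : ∀ t ∈ Finset.range (i+1),
        (-1:ℚ)^t / ((2*s:ℚ) - t) * (Nat.choose i t : ℚ)
            * (Nat.choose (s - t - 1 + (j-1)) (j-1) : ℚ)
          = ((-1:ℚ)^t / ((2*s:ℚ) - t) * (Nat.choose i t : ℚ)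
              * (Nat.choose (s - t - 1 + j) j : ℚ)) + Qf s i j (t+1) := by
      intro t ht
      rw [Finset.mem_range] at ht
      have e : Nat.choose (s - t - 1 + j) j
          = Nat.choose (s - t - 1 + (j-1)) (j-1) + Nat.choose (s - (t+1) - 1 + j) j := by
        have h1 := Nat.choose_succ_succ (s - t - 2 + j) (j-1)
        simp only [Nat.succ_eq_add_one] at h1
        rw [show s - t - 2 + j + 1 = s - t - 1 + j by omega,
            show j - 1 + 1 = j by omega] at h1
        rw [h1, show s - t - 1 + (j - 1) = s - t - 2 + j by omega,
            show s - (t+1) - 1 + j = s - t - 2 + j by omega]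
      rw [e]
      simp only [Qf]
      push_cast
      ring
    rw [Ss, Finset.sum_congr rfl step1, Finset.sum_add_distrib]
    congr 1
    · rw [Finset.sum_range_succ (n := i+1)]
      simp [Nat.choose_succ_self]
    · rw [Finset.sum_range_succ' (fun t => Qf s i j t) (i+1)]
      simp [Qf]
  have hf2 : Ss s i j = ∑ t ∈ Finset.range (i+1+1),
      ((-1:ℚ)^t / ((2*s:ℚ) - t) * (Nat.choose i t : ℚ) * (Nat.choose (s - t - 1 + j) j : ℚ)) := by
    rw [Finset.sum_range_succ (n := i+1)]
    simp [Ss, Nat.choose_succ_self]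
  have hsum : ∑ t ∈ Finset.range (i+1+1),
      (((s:ℚ) - j + 1) * (((-1:ℚ)^t / ((2*s:ℚ) - t) * (Nat.choose i t : ℚ)
            * (Nat.choose (s - t - 1 + j) j : ℚ)) + Qf s i j t)
        + ((j:ℚ) - i - 1) * ((-1:ℚ)^t / ((2*s:ℚ) - t) * (Nat.choose i t : ℚ)
            * (Nat.choose (s - t - 1 + j) j : ℚ))
        - ((2*(s:ℚ)) - i - 1) * ((-1:ℚ)^t / ((2*s:ℚ) - t) * (Nat.choose (i+1) t : ℚ)
            * (Nat.choose (s - t - 1 + j) j : ℚ))) = 0 := by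
    rw [Finset.sum_congr rfl (per_t s i j hij hj), Finset.sum_range_sub (Gg s i j)]
    simp [Gg, Nat.choose_succ_self]
  simp only [mul_add, Finset.sum_add_distrib, Finset.sum_sub_distrib, ← Finset.mul_sum] at hsum
  rw [hQ, hf2, Ss]
  push_cast at hsum ⊢
  linarith [hsum]


private lemma key (s : ℕ) (hs : 1 ≤ s) :
    ∀ i j : ℕ, i < j → j ≤ s →
      h s i j = (-1 : ℚ) ^ (i + 1) * (Nat.choose (2 * s) i : ℚ) * (Nat.choose (s + j - i - 1) s : ℚ)
        + (-1 : ℚ) ^ i * ((2 * s : ℚ) - i) * (Nat.choose (2 * s) i : ℚ) * Ss s i j := by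
  intro i
  induction i with
  | zero =>
    intro j hij hj
    have hsq : (0:ℚ) < (s:ℚ) := by exact_mod_cast (show 0 < s by omega)
    have hs0 : ((s:ℚ)) ≠ 0 := hsq.ne'
    simp only [h]
    rw [if_neg (by omega), Ss, Finset.sum_range_one]
    rw [show s + j - 0 - 1 = s + j - 1 by omega, show s - 0 - 1 + j = s + j - 1 by omega]
    have hsymm : Nat.choose (s+j-1) s = Nat.choose (s+j-1) (j-1) := by
      rw [← Nat.choose_symm (show s ≤ s + j - 1 by omega), show s + j - 1 - s = j - 1 by omega]
    have hr : (j:ℚ) * (Nat.choose (s+j-1) j : ℚ) = (Nat.choose (s+j-1) (j-1) : ℚ) * s := by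
      have h1 := Nat.choose_succ_right_eq (s+j-1) (j-1)
      rw [show j - 1 + 1 = j by omega, show s + j - 1 - (j-1) = s by omega] at h1
      have h2 := congrArg (fun n : ℕ => (n:ℚ)) h1
      push_cast at h2
      linarith [h2]
    rw [hsymm]
    simp only [pow_one, pow_zero, Nat.choose_zero_right, Nat.cast_one, Nat.cast_zero,
      Nat.choose_self, sub_zero, one_mul, mul_one, neg_mul, neg_one_mul, div_one]
    field_simp
    ring_nf
    linear_combination -hr
  | succ i IH =>
    intro j hij hj
    have IH1 := IH (j-1) (by omega) (by omega)
    have IH2 := IH j (by omega) hj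
    have hB := Bstep s i j hij hj
    have hiq : ((i:ℚ)+1) ≠ 0 := by positivity
    have hc : ((i:ℚ)+1) * (Nat.choose (2*s) (i+1) : ℚ)
        = (2*(s:ℚ) - i) * (Nat.choose (2*s) i : ℚ) := by
      have h1 := Nat.choose_succ_right_eq (2*s) i
      rw [show 2*s - i = 2*s - i by rfl] at h1
      have h2 := congrArg (fun n : ℕ => (n:ℚ)) h1
      simp only [Nat.cast_mul, Nat.cast_sub (show i ≤ 2*s by omega)] at h2
      push_cast at h2
      linarith [h2]
    have hn : ((j:ℚ) - i - 1) * (Nat.choose (s+j-i-1) s : ℚ)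
        = ((s:ℚ)+j-i-1) * (Nat.choose (s+j-i-2) s : ℚ) := by
      have h1 := aux1 (s+j-i-2) s
      rw [show s+j-i-2+1 = s+j-i-1 by omega, show s+j-i-1-s = j-i-1 by omega] at h1
      have h2 := congrArg (fun n : ℕ => (n:ℚ)) h1
      simp only [Nat.cast_mul] at h2
      rw [show ((s+j-i-1 : ℕ):ℚ) = (s:ℚ)+j-i-1 from by
            rw [show s+j-i-1 = s+j-(i+1) by omega, Nat.cast_sub (show i+1 ≤ s+j by omega)]
            push_cast; ring,
          show ((j-i-1 : ℕ):ℚ) = (j:ℚ)-i-1 from by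
            rw [show j-i-1 = j-(i+1) by omega, Nat.cast_sub (show i+1 ≤ j by omega)]
            push_cast; ring] at h2
      linear_combination -h2
    have hj1 : ((j-1 : ℕ) : ℚ) = (j:ℚ) - 1 := by
      rw [Nat.cast_sub (by omega)]; push_cast; ring
    simp only [h]
    rw [if_neg (by omega), IH1, IH2]
    rw [show s + (j-1) - i - 1 = s+j-i-2 by omega,
        show s + j - (i+1) - 1 = s+j-i-2 by omega]
    set c1 := (Nat.choose (2*s) i : ℚ)
    set c2 := (Nat.choose (2*s) (i+1) : ℚ)
    set n1 := (Nat.choose (s+j-i-1) s : ℚ)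
    set n2 := (Nat.choose (s+j-i-2) s : ℚ)
    set s1 := Ss s i j
    set s2 := Ss s i (j-1)
    set s3 := Ss s (i+1) j
    have hI : ((i:ℚ)+1) * ((i:ℚ)+1)⁻¹ = 1 := mul_inv_cancel₀ hiq
    push_cast
    linear_combination
      ((-1:ℚ)^i*c2*n2 - (-1:ℚ)^i*(2*(s:ℚ)-i-1)*c2*s3) * hI
      + ((-1:ℚ)^i*c1*((i:ℚ)+1)⁻¹) * hn
      - ((-1:ℚ)^i*(n2-(2*(s:ℚ)-i-1)*s3)*((i:ℚ)+1)⁻¹) * hc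
      + ((-1:ℚ)^i*(2*(s:ℚ)-i)*c1*((i:ℚ)+1)⁻¹) * hB

/-- Explicit three-term formula for the sequence, for 0 ≤ i < j ≤ s. -/
theorem stmt9 (s : ℕ) (hs : 1 ≤ s) (i j : ℕ) (hij : i < j) (hj : j ≤ s) :
    h s i j
      = (-1 : ℚ) ^ (j + 1) * (Nat.choose s j : ℚ) * (if j ≤ i then 1 else 0)
        + (-1 : ℚ) ^ (i + 1) * (Nat.choose (2 * s) i : ℚ) * (Nat.choose (s + j - i - 1) s : ℚ)
        + (-1 : ℚ) ^ i * ((2 * s : ℚ) - i) * (Nat.choose (2 * s) i : ℚ) *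
            ∑ t ∈ Finset.range (i + 1),
              (-1 : ℚ) ^ t / ((2 * s : ℚ) - t) * (Nat.choose i t : ℚ) *
                (Nat.choose (s - t - 1 + j) j : ℚ) := by
  rw [if_neg (by omega), mul_zero, zero_add]
  exact key s hs i j hij hj
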